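/- For (a,b) ∈ (ℤ/4ℤ)², the ideals of R_{a+bw} are totally ordered by inclusion (i.e., R_{a+bw} is a chain ring) if and only if a + bw ∈ {2, 3, 1+w, 3+w, 1+2w, 2+2w, 1+3w, 3+3w}, i.e., if and only if (a,b) ∈ {(2,0), (3,0), (1,1), (3,1), (1,2), (2,2), (1,3), (3,3)}; for the remaining eight values θ ∈ {0, 1, w, 2w, 3w, 2+w, 3+2w, 2+3w} there exist two ideals of R_θ neither of which contains the other. -/

import Mathlib

open Polynomial

/-- The base ring ℤ/4ℤ. -/
abbrev Z4 := ZMod 4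

/-- The polynomial X² − (a + bX) over ℤ/4ℤ. -/
noncomputable def wPoly (a b : Z4) : Z4[X] := X ^ 2 - (C b * X + C a)

/-- The ring R_{a+bw} = (ℤ/4ℤ)[X]/(X² − (a + bX)); every element is uniquely
x₀ + x₁·w with x₀, x₁ ∈ ℤ/4ℤ, and w² = a + b·w. -/
abbrev Rw (a b : Z4) : Type := AdjoinRoot (wPoly a b)

/-- The element w of R_{a+bw}. -/
noncomputable def ww (a b : Z4) : Rw a b := AdjoinRoot.root _

structure Sr (a b : Z4) : Type where
  x0 : Z4
  x1 : Z4
deriving DecidableEq, Fintype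

namespace Sr
variable {a b : Z4}

@[ext] theorem ext' {p q : Sr a b} (h0 : p.x0 = q.x0) (h1 : p.x1 = q.x1) : p = q := by
  cases p; cases q; simp_all

instance : Add (Sr a b) := ⟨fun p q => ⟨p.x0 + q.x0, p.x1 + q.x1⟩⟩
instance : Mul (Sr a b) := ⟨fun p q =>
  ⟨p.x0 * q.x0 + a * (p.x1 * q.x1), p.x0 * q.x1 + p.x1 * q.x0 + b * (p.x1 * q.x1)⟩⟩
instance : Neg (Sr a b) := ⟨fun p => ⟨-p.x0, -p.x1⟩⟩
instance : Zero (Sr a b) := ⟨⟨0, 0⟩⟩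
instance : One (Sr a b) := ⟨⟨1, 0⟩⟩

@[simp] theorem add_x0 (p q : Sr a b) : (p + q).x0 = p.x0 + q.x0 := rfl
@[simp] theorem add_x1 (p q : Sr a b) : (p + q).x1 = p.x1 + q.x1 := rfl
@[simp] theorem mul_x0 (p q : Sr a b) : (p * q).x0 = p.x0 * q.x0 + a * (p.x1 * q.x1) := rfl
@[simp] theorem mul_x1 (p q : Sr a b) :
    (p * q).x1 = p.x0 * q.x1 + p.x1 * q.x0 + b * (p.x1 * q.x1) := rfl
@[simp] theorem neg_x0 (p : Sr a b) : (-p).x0 = -p.x0 := rfl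
@[simp] theorem neg_x1 (p : Sr a b) : (-p).x1 = -p.x1 := rfl
@[simp] theorem zero_x0 : (0 : Sr a b).x0 = 0 := rfl
@[simp] theorem zero_x1 : (0 : Sr a b).x1 = 0 := rfl
@[simp] theorem one_x0 : (1 : Sr a b).x0 = 1 := rfl
@[simp] theorem one_x1 : (1 : Sr a b).x1 = 0 := rfl

instance : CommRing (Sr a b) where
  add_assoc := by intros; ext <;> simp <;> ring
  zero_add := by intros; ext <;> simp
  add_zero := by intros; ext <;> simp
  add_comm := by intros; ext <;> simp <;> ring
  neg_add_cancel := by intros; ext <;> simp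
  left_distrib := by intros; ext <;> simp <;> ring
  right_distrib := by intros; ext <;> simp <;> ring
  zero_mul := by intros; ext <;> simp
  mul_zero := by intros; ext <;> simp
  mul_assoc := by intros; ext <;> simp <;> ring
  one_mul := by intros; ext <;> simp
  mul_one := by intros; ext <;> simp
  mul_comm := by intros; ext <;> simp <;> ring
  nsmul := nsmulRec
  zsmul := zsmulRec

theorem sub_def (p q : Sr a b) : p - q = p + -q := rfl
@[simp] theorem sub_x0 (p q : Sr a b) : (p - q).x0 = p.x0 - q.x0 := by
  rw [sub_def]; simp [sub_eq_add_neg]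
@[simp] theorem sub_x1 (p q : Sr a b) : (p - q).x1 = p.x1 - q.x1 := by
  rw [sub_def]; simp [sub_eq_add_neg]

def emb (a b : Z4) : Z4 →+* Sr a b where
  toFun c := ⟨c, 0⟩
  map_one' := by ext <;> simp
  map_mul' := by intros; ext <;> simp
  map_zero' := by ext <;> simp
  map_add' := by intros; ext <;> simp

instance : Algebra Z4 (Sr a b) := (emb a b).toAlgebra

@[simp] theorem algebraMap_apply (c : Z4) : (algebraMap Z4 (Sr a b) c) = (⟨c, 0⟩ : Sr a b) := rfl

/-- the element w in Sr -/
def ws (a b : Z4) : Sr a b := ⟨0, 1⟩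

theorem aeval_ws : aeval (ws a b) (wPoly a b) = 0 := by
  rw [wPoly]
  simp only [map_sub, map_add, map_mul, map_pow, aeval_X, aeval_C]
  ext <;> simp [pow_two, ws] <;> ring

end Sr

noncomputable def fHom (a b : Z4) : Rw a b →ₐ[Z4] Sr a b :=
  AdjoinRoot.liftAlgHom (wPoly a b) (Algebra.ofId Z4 (Sr a b)) (Sr.ws a b) Sr.aeval_ws

noncomputable def gHom (a b : Z4) : Sr a b →ₐ[Z4] Rw a b where
  toFun p := AdjoinRoot.mk (wPoly a b) (C p.x0 + C p.x1 * X)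
  map_one' := by simp
  map_mul' := by
    intro p q
    rw [← map_mul, AdjoinRoot.mk_eq_mk]
    refine ⟨-C (p.x1 * q.x1), ?_⟩
    rw [wPoly]
    simp only [Sr.mul_x0, Sr.mul_x1, map_add, map_mul]
    ring
  map_zero' := by simp
  map_add' := by
    intro p q
    show AdjoinRoot.mk (wPoly a b) (C (p + q).x0 + C (p + q).x1 * X) =
      AdjoinRoot.mk (wPoly a b) (C p.x0 + C p.x1 * X) +
        AdjoinRoot.mk (wPoly a b) (C q.x0 + C q.x1 * X)
    rw [← map_add]
    exact congrArg _ (by simp only [Sr.add_x0, Sr.add_x1, map_add]; ring)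
  commutes' := by
    intro c
    show AdjoinRoot.mk (wPoly a b) (C (algebraMap Z4 (Sr a b) c).x0 +
        C (algebraMap Z4 (Sr a b) c).x1 * X) = algebraMap Z4 (Rw a b) c
    rw [AdjoinRoot.algebraMap_eq]
    show _ = AdjoinRoot.mk (wPoly a b) (C c)
    exact congrArg _ (by simp [Sr.algebraMap_apply])

theorem fHom_ww (a b : Z4) : fHom a b (ww a b) = Sr.ws a b := by
  show AdjoinRoot.liftAlgHom (wPoly a b) (Algebra.ofId Z4 (Sr a b)) (Sr.ws a b) Sr.aeval_ws
      (AdjoinRoot.root (wPoly a b)) = Sr.ws a b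
  exact AdjoinRoot.liftAlgHom_root (wPoly a b) (Algebra.ofId Z4 (Sr a b)) (Sr.ws a b) Sr.aeval_ws

noncomputable def rwEquiv (a b : Z4) : Rw a b ≃ₐ[Z4] Sr a b :=
  AlgEquiv.ofAlgHom (fHom a b) (gHom a b)
    (by
      apply AlgHom.ext
      rintro ⟨p0, p1⟩
      show fHom a b (AdjoinRoot.mk (wPoly a b) (C p0 + C p1 * X)) = _
      rw [fHom]
      show aeval (Sr.ws a b) (C p0 + C p1 * X) = _
      simp only [map_add, map_mul, aeval_C, aeval_X]
      ext <;> simp [Sr.ws]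
      )
    (by
      apply AdjoinRoot.algHom_ext
      have h1 : fHom a b (AdjoinRoot.root (wPoly a b)) = Sr.ws a b := fHom_ww a b
      simp only [AlgHom.coe_comp, Function.comp_apply, h1, AlgHom.coe_id, id_eq]
      show AdjoinRoot.mk (wPoly a b) (C (Sr.ws a b).x0 + C (Sr.ws a b).x1 * X) = _
      simp [Sr.ws, AdjoinRoot.mk_X])

def divTotal (a b : Z4) : Prop :=
  ∀ x y : Sr a b, (∃ c : Sr a b, c * y = x) ∨ (∃ c : Sr a b, c * x = y)

instance (a b : Z4) : Decidable (divTotal a b) := by unfold divTotal; infer_instance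

theorem divTotal_iff (a b : Z4) :
    divTotal a b ↔
      ((a, b) = (2, 0) ∨ (a, b) = (3, 0) ∨ (a, b) = (1, 1) ∨ (a, b) = (3, 1) ∨
       (a, b) = (1, 2) ∨ (a, b) = (2, 2) ∨ (a, b) = (1, 3) ∨ (a, b) = (3, 3)) := by
  revert a b; decide

theorem chain_transfer {A B : Type*} [CommRing A] [CommRing B] (e : A ≃+* B)
    (h : ∀ I J : Ideal A, I ≤ J ∨ J ≤ I) : ∀ I J : Ideal B, I ≤ J ∨ J ≤ I := by
  intro I J
  rcases h (I.comap (e : A →+* B)) (J.comap (e : A →+* B)) with h' | h'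
  · left
    intro x hx
    have h1 : e.symm x ∈ I.comap (e : A →+* B) := by
      rw [Ideal.mem_comap]; show e (e.symm x) ∈ I; rw [e.apply_symm_apply]; exact hx
    have h2 := h' h1
    rw [Ideal.mem_comap] at h2
    have h3 : e (e.symm x) ∈ J := h2
    rwa [e.apply_symm_apply] at h3
  · right
    intro x hx
    have h1 : e.symm x ∈ J.comap (e : A →+* B) := by
      rw [Ideal.mem_comap]; show e (e.symm x) ∈ J; rw [e.apply_symm_apply]; exact hx
    have h2 := h' h1
    rw [Ideal.mem_comap] at h2
    have h3 : e (e.symm x) ∈ I := h2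
    rwa [e.apply_symm_apply] at h3

theorem div_to_chain {A : Type*} [CommRing A]
    (h : ∀ x y : A, (∃ c, c * y = x) ∨ (∃ c, c * x = y)) :
    ∀ I J : Ideal A, I ≤ J ∨ J ≤ I := by
  intro I J
  by_cases hIJ : I ≤ J
  · exact Or.inl hIJ
  · right
    obtain ⟨x, hxI, hxJ⟩ := SetLike.not_le_iff_exists.mp hIJ
    intro y hy
    rcases h x y with ⟨c, hc⟩ | ⟨c, hc⟩
    · exact absurd (hc ▸ J.mul_mem_left c hy) hxJ
    · exact hc ▸ I.mul_mem_left c hxI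

theorem chain_to_div {A : Type*} [CommRing A]
    (h : ∀ I J : Ideal A, I ≤ J ∨ J ≤ I) :
    ∀ x y : A, (∃ c, c * y = x) ∨ (∃ c, c * x = y) := by
  intro x y
  rcases h (Ideal.span {x}) (Ideal.span {y}) with h' | h'
  · exact Or.inl (Ideal.mem_span_singleton'.mp (h' (Ideal.mem_span_singleton_self x)))
  · exact Or.inr (Ideal.mem_span_singleton'.mp (h' (Ideal.mem_span_singleton_self y)))

/-- R_{a+bw} is a chain ring (its ideals are totally ordered by inclusion)
iff a + bw ∈ {2, 3, 1+w, 3+w, 1+2w, 2+2w, 1+3w, 3+3w}; for the remaining eight values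
of a + bw there exist two incomparable ideals. -/
theorem Rw_chain_ring_classification (a b : Z4) :
    ((∀ I J : Ideal (Rw a b), I ≤ J ∨ J ≤ I) ↔
      ((a, b) = (2, 0) ∨ (a, b) = (3, 0) ∨ (a, b) = (1, 1) ∨ (a, b) = (3, 1) ∨
       (a, b) = (1, 2) ∨ (a, b) = (2, 2) ∨ (a, b) = (1, 3) ∨ (a, b) = (3, 3))) ∧
    (¬((a, b) = (2, 0) ∨ (a, b) = (3, 0) ∨ (a, b) = (1, 1) ∨ (a, b) = (3, 1) ∨
       (a, b) = (1, 2) ∨ (a, b) = (2, 2) ∨ (a, b) = (1, 3) ∨ (a, b) = (3, 3)) →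
      ∃ I J : Ideal (Rw a b), ¬I ≤ J ∧ ¬J ≤ I) := by
  have e : Rw a b ≃+* Sr a b := (rwEquiv a b).toRingEquiv
  have key : (∀ I J : Ideal (Rw a b), I ≤ J ∨ J ≤ I) ↔ divTotal a b := by
    constructor
    · intro h
      exact chain_to_div (chain_transfer e h)
    · intro h
      exact chain_transfer e.symm (div_to_chain h)
  constructor
  · exact key.trans (divTotal_iff a b)
  · intro hlist
    have h1 : ¬(∀ I J : Ideal (Rw a b), I ≤ J ∨ J ≤ I) := by
      rw [key, divTotal_iff]; exact hlist
    push_neg at h1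
    obtain ⟨I, J, hIJ, hJI⟩ := h1
    exact ⟨I, J, hIJ, hJI⟩
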